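/- Bound on the computational error by the discrete residual. Fix p ≥ 0 and nodes 0 ≤ τ₀ < ⋯ < τ_p ≤ 1. There exists a constant C_p′, depending only on p and the nodes, with the following property. Let 0 = t₀ < t₁ < ⋯ < t_M = T be a partition with Δt_m = t_m − t_{m−1}, let z : [0,T] → ℝ^N be continuous, and for each m and k = 0,…,p let R̄_k^m ∈ ℝ^N. Then |Σ_{m=1}^{M} Σ_{k=0}^{p} ⟨z(t_{m−1} + τ_k Δt_m), R̄_k^m⟩| ≤ C_p′ · (max_{0≤k≤p, 1≤m≤M} Δt_m^{−1}‖R̄_k^m‖) · ∫₀ᵀ ‖(πz)(t)‖ dt, where (πz)(t) = Σ_{k=0}^{p} z(t_{m−1} + τ_k Δt_m) λ_k((t − t_{m−1})/Δt_m) for t ∈ (t_{m−1}, t_m] and {λ_k} is the Lagrange basis of polynomials of degree ≤ p on [0,1] with λ_i(τ_j) = δ_{ij}. -/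

import Mathlib

open MeasureTheory
open scoped InnerProductSpace

/-- The Lagrange nodal basis `{λ_k}` of polynomials of degree `≤ p` on `[0,1]`
associated with nodes `τ₀ < ⋯ < τ_p`, i.e. `λ_i(τ_j) = δ_{ij}`. -/
noncomputable def lagB (p : ℕ) (τ : Fin (p + 1) → ℝ) (k : Fin (p + 1)) (x : ℝ) : ℝ :=
  ∏ j ∈ Finset.univ.erase k, (x - τ j) / (τ k - τ j)

/-- The degree-`p` Lagrange interpolant of `z` on the interval `[a, b]` at the
nodal points `a + τ_k (b − a)`. -/
noncomputable def interpOn {N : ℕ} (p : ℕ) (τ : Fin (p + 1) → ℝ)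
    (z : ℝ → EuclideanSpace ℝ (Fin N)) (a b s : ℝ) : EuclideanSpace ℝ (Fin N) :=
  ∑ k, lagB p τ k ((s - a) / (b - a)) • z (a + τ k * (b - a))

section aux
variable {p : ℕ} {τ : Fin (p + 1) → ℝ}

lemma lagB_continuous (k : Fin (p+1)) : Continuous (lagB p τ k) := by
  unfold lagB
  exact continuous_finset_prod _ fun j _ =>
    (continuous_id.sub continuous_const).div_const _

lemma lagB_self (hτ : Function.Injective τ) (k : Fin (p+1)) : lagB p τ k (τ k) = 1 := by
  unfold lagB
  refine Finset.prod_eq_one fun j hj => ?_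
  have : τ k - τ j ≠ 0 := sub_ne_zero.2 fun h => (Finset.mem_erase.1 hj).1 (hτ h.symm)
  exact div_self this

lemma lagB_ne {j k : Fin (p+1)} (h : j ≠ k) : lagB p τ k (τ j) = 0 := by
  unfold lagB
  refine Finset.prod_eq_zero (Finset.mem_erase.2 ⟨h, Finset.mem_univ j⟩) (by simp)

end aux

noncomputable def gram (p : ℕ) (τ : Fin (p + 1) → ℝ) : Matrix (Fin (p + 1)) (Fin (p + 1)) ℝ :=
  Matrix.of fun i j => ∫ x in (0:ℝ)..1, lagB p τ i x * lagB p τ j x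

section gram
variable {p : ℕ} {τ : Fin (p + 1) → ℝ}

lemma gram_posDef (hτ : StrictMono τ) (hτ0 : 0 ≤ τ 0) (hτ1 : τ (Fin.last p) ≤ 1) :
    (gram p τ).PosDef := by
  rw [Matrix.posDef_iff_dotProduct_mulVec]
  constructor
  · ext i j
    simp only [gram, Matrix.conjTranspose_apply, Matrix.of_apply, star_trivial]
    congr 1; ext x; ring
  · intro x hx
    have hint : ∀ i j : Fin (p+1), IntervalIntegrable
        (fun t => (x i * x j) * (lagB p τ i t * lagB p τ j t)) volume 0 1 := fun i j =>
      (continuous_const.mul ((lagB_continuous i).mul (lagB_continuous j))).intervalIntegrable 0 1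
    have key : dotProduct (star x) ((gram p τ).mulVec x)
        = ∫ t in (0:ℝ)..1, (∑ i, x i * lagB p τ i t) ^ 2 := by
      have h1 : ∀ t : ℝ, (∑ i, x i * lagB p τ i t) ^ 2
          = ∑ i, ∑ j, (x i * x j) * (lagB p τ i t * lagB p τ j t) := by
        intro t
        rw [sq, Finset.sum_mul_sum]
        exact Finset.sum_congr rfl fun i _ => Finset.sum_congr rfl fun j _ => by ring
      simp only [h1]
      rw [intervalIntegral.integral_finset_sum
        (f := fun i t => ∑ j, (x i * x j) * (lagB p τ i t * lagB p τ j t)) (fun i _ => (continuous_finset_sum _ fun j _ =>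
          continuous_const.mul ((lagB_continuous i).mul (lagB_continuous j))).intervalIntegrable 0 1)]
      refine Eq.symm (Finset.sum_congr rfl fun i _ => ?_)
      rw [intervalIntegral.integral_finset_sum (fun j _ => hint i j)]
      simp only [dotProduct, Matrix.mulVec, Pi.star_apply, star_trivial, gram,
        Matrix.of_apply, Finset.mul_sum, intervalIntegral.integral_const_mul]
      exact Finset.sum_congr rfl fun j _ => by ring
    rw [key]
    obtain ⟨k, hk⟩ : ∃ k, x k ≠ 0 := by simpa using Function.ne_iff.1 hx
    have hfk : (∑ i, x i * lagB p τ i (τ k)) = x k := by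
      rw [Finset.sum_eq_single k]
      · rw [lagB_self hτ.injective, mul_one]
      · intro i _ hik
        rw [lagB_ne (Ne.symm hik), mul_zero]
      · simp
    have hcont : Continuous fun t => (∑ i, x i * lagB p τ i t) ^ 2 :=
      (continuous_finset_sum _ fun i _ => continuous_const.mul (lagB_continuous i)).pow 2
    refine intervalIntegral.integral_pos zero_lt_one hcont.continuousOn
      (fun t _ => sq_nonneg _) ⟨τ k, ⟨le_trans hτ0 (hτ.monotone (Fin.zero_le k)),
        le_trans (hτ.monotone (Fin.le_last k)) hτ1⟩, ?_⟩
    rw [hfk]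
    exact pow_pos (abs_pos.mpr hk) 2 |>.trans_le (by rw [sq_abs])
end gram

section dual
variable {p : ℕ} {τ : Fin (p + 1) → ℝ}

lemma exists_dual (hτ : StrictMono τ) (hτ0 : 0 ≤ τ 0) (hτ1 : τ (Fin.last p) ≤ 1) :
    ∃ g : Fin (p + 1) → ℝ → ℝ, (∀ k, Continuous (g k)) ∧
      ∀ k j, (∫ x in (0:ℝ)..1, g k x * lagB p τ j x) = if k = j then 1 else 0 := by
  have hpd := gram_posDef hτ hτ0 hτ1
  refine ⟨fun k x => ∑ i, (gram p τ)⁻¹ k i * lagB p τ i x,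
    fun k => continuous_finset_sum _ fun i _ => continuous_const.mul (lagB_continuous i), ?_⟩
  intro k j
  have h1 : (fun x => (∑ i, (gram p τ)⁻¹ k i * lagB p τ i x) * lagB p τ j x)
      = fun x => ∑ i, (gram p τ)⁻¹ k i * (lagB p τ i x * lagB p τ j x) := by
    funext x
    rw [Finset.sum_mul]
    exact Finset.sum_congr rfl fun i _ => by ring
  rw [h1, intervalIntegral.integral_finset_sum (f := fun i x => (gram p τ)⁻¹ k i * (lagB p τ i x * lagB p τ j x)) (fun i _ =>
    (continuous_const.mul ((lagB_continuous i).mul (lagB_continuous j))).intervalIntegrable 0 1)]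
  simp_rw [intervalIntegral.integral_const_mul]
  have h2 : ((gram p τ)⁻¹ * gram p τ) k j = if k = j then 1 else 0 := by
    rw [Matrix.nonsing_inv_mul _ ((Matrix.isUnit_iff_isUnit_det _).1 hpd.isUnit),
      Matrix.one_apply]
  rw [← h2, Matrix.mul_apply]
  rfl

end dual

section coeff
variable {p : ℕ} {τ : Fin (p + 1) → ℝ}

lemma coeff_bound (hτ : StrictMono τ) (hτ0 : 0 ≤ τ 0) (hτ1 : τ (Fin.last p) ≤ 1) :
    ∃ C : ℝ, 0 ≤ C ∧ ∀ (N : ℕ) (c : Fin (p + 1) → EuclideanSpace ℝ (Fin N)),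
      ∑ k, ‖c k‖ ≤ C * ∫ x in (0:ℝ)..1, ‖∑ j, lagB p τ j x • c j‖ := by
  obtain ⟨g, hgc, hgd⟩ := exists_dual hτ hτ0 hτ1
  obtain ⟨B, hB⟩ : ∃ B : ℝ, ∀ k, ∀ x ∈ Set.Icc (0:ℝ) 1, |g k x| ≤ B := by
    choose B hB using fun k : Fin (p+1) =>
      (isCompact_Icc (a := (0:ℝ)) (b := 1)).exists_bound_of_continuousOn (hgc k).continuousOn
    refine ⟨Finset.univ.sup' Finset.univ_nonempty B, fun k x hx => ?_⟩
    exact le_trans (by simpa using hB k x hx) (Finset.le_sup' _ (Finset.mem_univ k))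
  have hB0 : 0 ≤ B := le_trans (abs_nonneg _) (hB 0 0 (by norm_num))
  refine ⟨(p + 1) * B, by positivity, ?_⟩
  intro N c
  set q : ℝ → EuclideanSpace ℝ (Fin N) := fun x => ∑ j, lagB p τ j x • c j with hq
  have hqc : Continuous q :=
    continuous_finset_sum _ fun j _ => (lagB_continuous j).smul continuous_const
  have hck : ∀ k, c k = ∫ x in (0:ℝ)..1, g k x • q x := by
    intro k
    have h1 : (fun x => g k x • q x) = fun x => ∑ j, (g k x * lagB p τ j x) • c j := by
      funext x
      rw [hq, Finset.smul_sum]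
      exact Finset.sum_congr rfl fun j _ => smul_smul _ _ _
    rw [h1, intervalIntegral.integral_finset_sum (f := fun j x => (g k x * lagB p τ j x) • c j) (fun j _ =>
      (((hgc k).mul (lagB_continuous j)).smul continuous_const).intervalIntegrable 0 1)]
    simp_rw [intervalIntegral.integral_smul_const, hgd]
    simp [ite_smul]
  have hkey : ∀ k, ‖c k‖ ≤ B * ∫ x in (0:ℝ)..1, ‖q x‖ := by
    intro k
    rw [hck k]
    calc ‖∫ x in (0:ℝ)..1, g k x • q x‖
        ≤ ∫ x in (0:ℝ)..1, ‖g k x • q x‖ :=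
          intervalIntegral.norm_integral_le_integral_norm zero_le_one
      _ ≤ ∫ x in (0:ℝ)..1, B * ‖q x‖ := by
          refine intervalIntegral.integral_mono_on zero_le_one
            (((hgc k).smul hqc).norm.intervalIntegrable 0 1)
            ((continuous_const.mul hqc.norm).intervalIntegrable 0 1) fun x hx => ?_
          rw [norm_smul, Real.norm_eq_abs]
          exact mul_le_mul_of_nonneg_right (hB k x hx) (norm_nonneg _)
      _ = B * ∫ x in (0:ℝ)..1, ‖q x‖ := intervalIntegral.integral_const_mul _ _
  calc ∑ k, ‖c k‖ ≤ ∑ _k : Fin (p+1), B * ∫ x in (0:ℝ)..1, ‖q x‖ :=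
        Finset.sum_le_sum fun k _ => hkey k
    _ = (p + 1) * B * ∫ x in (0:ℝ)..1, ‖q x‖ := by
        rw [Finset.sum_const, Finset.card_univ]
        simp [mul_assoc]

end coeff

lemma interp_integral {N : ℕ} (p : ℕ) (τ : Fin (p + 1) → ℝ)
    (z : ℝ → EuclideanSpace ℝ (Fin N)) {a b : ℝ} (hab : a < b) :
    ∫ s in a..b, ‖interpOn p τ z a b s‖
      = (b - a) * ∫ x in (0:ℝ)..1, ‖∑ j, lagB p τ j x • z (a + τ j * (b - a))‖ := by
  have hb : b - a ≠ 0 := sub_ne_zero.2 hab.ne'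
  set F : ℝ → ℝ := fun x => ‖∑ j, lagB p τ j x • z (a + τ j * (b - a))‖ with hF
  have h1 : ∀ s : ℝ, ‖interpOn p τ z a b s‖ = (fun y => F (y / (b - a))) (s - a) := by
    intro s; simp only [interpOn, hF]
  simp_rw [h1]
  rw [intervalIntegral.integral_comp_sub_right (fun y => F (y / (b - a))) a,
    intervalIntegral.integral_comp_div (fun x => F x) hb, sub_self, zero_div, div_self hb,
    smul_eq_mul]

/-- **Bound on the computational error by the discrete residual.**
There is a constant `C_p'`, depending only on `p` and the nodes, such that
`|Σ_m Σ_k ⟨z(t_{m−1} + τ_k Δt_m), R̄_k^m⟩| ≤ C_p' · max_{k,m} Δt_m^{−1}‖R̄_k^m‖ · ∫₀ᵀ ‖πz‖ dt`,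
where `∫₀ᵀ ‖πz‖ dt = Σ_m ∫_{t_{m−1}}^{t_m} ‖πz‖ dt` and `πz` is the piecewise Lagrange
interpolant of degree `p` on the partition. -/
theorem computational_error_bound (p : ℕ) (τ : Fin (p + 1) → ℝ)
    (hτ : StrictMono τ) (hτ0 : 0 ≤ τ 0) (hτ1 : τ (Fin.last p) ≤ 1) :
    ∃ Cp' : ℝ,
      ∀ (N M : ℕ) (hM : 0 < M) (T : ℝ)
        (t : ℕ → ℝ) (_ht0 : t 0 = 0) (_htM : t M = T)
        (_htlt : ∀ m < M, t m < t (m + 1))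
        (z : ℝ → EuclideanSpace ℝ (Fin N)) (_hz : ContinuousOn z (Set.Icc 0 T))
        (Rbar : ℕ → Fin (p + 1) → EuclideanSpace ℝ (Fin N)),
        |∑ m ∈ Finset.range M, ∑ k, ⟪z (t m + τ k * (t (m + 1) - t m)), Rbar m k⟫_ℝ|
          ≤ Cp'
            * ((Finset.range M).sup' (Finset.nonempty_range_iff.mpr hM.ne')
                fun m => Finset.univ.sup' Finset.univ_nonempty
                  fun k : Fin (p + 1) => ‖Rbar m k‖ / (t (m + 1) - t m))
            * ∑ m ∈ Finset.range M,
                ∫ s in t m..t (m + 1), ‖interpOn p τ z (t m) (t (m + 1)) s‖ := by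
  obtain ⟨C, hC0, hC⟩ := coeff_bound hτ hτ0 hτ1
  refine ⟨C, ?_⟩
  intro N M hM T t _ht0 _htM _htlt z _hz Rbar
  set S := (Finset.range M).sup' (Finset.nonempty_range_iff.mpr hM.ne')
      (fun m => Finset.univ.sup' Finset.univ_nonempty
        fun k : Fin (p + 1) => ‖Rbar m k‖ / (t (m + 1) - t m)) with hS
  have hSnn : 0 ≤ S := by
    have h01 : (0:ℕ) ∈ Finset.range M := Finset.mem_range.2 hM
    have hΔ : 0 < t 1 - t 0 := sub_pos.2 (_htlt 0 hM)
    calc (0:ℝ) ≤ ‖Rbar 0 0‖ / (t 1 - t 0) := by positivity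
      _ ≤ S := le_trans
          (Finset.le_sup' (fun k : Fin (p + 1) => ‖Rbar 0 k‖ / (t (0 + 1) - t 0))
            (Finset.mem_univ (0 : Fin (p + 1)))) (Finset.le_sup' (fun m => Finset.univ.sup' Finset.univ_nonempty
            fun k : Fin (p + 1) => ‖Rbar m k‖ / (t (m + 1) - t m)) h01)
  have hmain : ∀ m ∈ Finset.range M,
      ∑ k, ‖z (t m + τ k * (t (m + 1) - t m))‖ * ‖Rbar m k‖
        ≤ C * S * ∫ s in t m..t (m + 1), ‖interpOn p τ z (t m) (t (m + 1)) s‖ := by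
    intro m hm
    have hmM := Finset.mem_range.1 hm
    have hΔ : 0 < t (m + 1) - t m := sub_pos.2 (_htlt m hmM)
    have hR : ∀ k, ‖Rbar m k‖ ≤ S * (t (m + 1) - t m) := by
      intro k
      have h1 : ‖Rbar m k‖ / (t (m + 1) - t m) ≤ S :=
        le_trans
          (Finset.le_sup' (fun k : Fin (p + 1) => ‖Rbar m k‖ / (t (m + 1) - t m))
            (Finset.mem_univ k)) (Finset.le_sup' (fun m => Finset.univ.sup' Finset.univ_nonempty
            fun k : Fin (p + 1) => ‖Rbar m k‖ / (t (m + 1) - t m)) hm)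
      calc ‖Rbar m k‖ = (‖Rbar m k‖ / (t (m + 1) - t m)) * (t (m + 1) - t m) :=
            (div_mul_cancel₀ _ hΔ.ne').symm
        _ ≤ S * (t (m + 1) - t m) := mul_le_mul_of_nonneg_right h1 hΔ.le
    calc ∑ k, ‖z (t m + τ k * (t (m + 1) - t m))‖ * ‖Rbar m k‖
        ≤ ∑ k, ‖z (t m + τ k * (t (m + 1) - t m))‖ * (S * (t (m + 1) - t m)) :=
          Finset.sum_le_sum fun k _ => mul_le_mul_of_nonneg_left (hR k) (norm_nonneg _)
      _ = (S * (t (m + 1) - t m)) * ∑ k, ‖z (t m + τ k * (t (m + 1) - t m))‖ := by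
          rw [← Finset.sum_mul, mul_comm]
      _ ≤ (S * (t (m + 1) - t m)) * (C * ∫ x in (0:ℝ)..1,
            ‖∑ j, lagB p τ j x • z (t m + τ j * (t (m + 1) - t m))‖) :=
          mul_le_mul_of_nonneg_left (hC N _) (by positivity)
      _ = C * S * ∫ s in t m..t (m + 1), ‖interpOn p τ z (t m) (t (m + 1)) s‖ := by
          rw [interp_integral p τ z (_htlt m hmM)]; ring
  calc |∑ m ∈ Finset.range M, ∑ k, ⟪z (t m + τ k * (t (m + 1) - t m)), Rbar m k⟫_ℝ|
      ≤ ∑ m ∈ Finset.range M, ∑ k, ‖z (t m + τ k * (t (m + 1) - t m))‖ * ‖Rbar m k‖ := by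
        refine (Finset.abs_sum_le_sum_abs _ _).trans (Finset.sum_le_sum fun m _ => ?_)
        refine (Finset.abs_sum_le_sum_abs _ _).trans (Finset.sum_le_sum fun k _ => ?_)
        exact abs_real_inner_le_norm _ _
    _ ≤ ∑ m ∈ Finset.range M, C * S * ∫ s in t m..t (m + 1),
          ‖interpOn p τ z (t m) (t (m + 1)) s‖ := Finset.sum_le_sum hmain
    _ = C * S * ∑ m ∈ Finset.range M, ∫ s in t m..t (m + 1),
          ‖interpOn p τ z (t m) (t (m + 1)) s‖ := by rw [← Finset.mul_sum]
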